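/- For all integers k ≥ 1 and μ ≥ 0 with μ ≤ k, the Stirling numbers of the second kind satisfy (μ+1)·S(k+1, μ+2) = Σ_{ν=1}^{k-μ} C(k, ν) · S(k-ν+1, μ+1). -/

import Mathlib

/-- Stirling numbers of the second kind. -/
def stirling2 : ℕ → ℕ → ℕ
  | 0, 0 => 1
  | 0, _ + 1 => 0
  | _ + 1, 0 => 0
  | n + 1, k + 1 => (k + 1) * stirling2 n (k + 1) + stirling2 n k

lemma stirling2_eq_zero : ∀ n m : ℕ, n < m → stirling2 n m = 0
  | 0, 0, h => absurd h (lt_irrefl 0)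
  | 0, _ + 1, _ => rfl
  | n + 1, 0, h => by omega
  | n + 1, m + 1, h => by
    rw [stirling2, stirling2_eq_zero n (m + 1) (by omega),
      stirling2_eq_zero n m (by omega)]
    ring

lemma aux (k : ℕ) : ∀ μ : ℕ, (μ + 1) * stirling2 (k + 1) (μ + 2)
    = ∑ i ∈ Finset.range (k - μ), k.choose (i + 1) * stirling2 (k - i) (μ + 1) := by
  induction k with
  | zero =>
    intro μ
    simp [stirling2_eq_zero 1 (μ + 2) (by omega)]
  | succ k ih =>
    intro μ
    by_cases hμ : k + 1 ≤ μ
    · rw [Nat.sub_eq_zero_of_le hμ]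
      simp [stirling2_eq_zero (k + 2) (μ + 2) (by omega)]
    push_neg at hμ
    have hμk : μ ≤ k := by omega
    have hN : k + 1 - μ = (k - μ) + 1 := by omega
    rw [hN]
    have e1 : ∑ i ∈ Finset.range ((k - μ) + 1),
        (k + 1).choose (i + 1) * stirling2 (k + 1 - i) (μ + 1)
        = (∑ i ∈ Finset.range ((k - μ) + 1),
            k.choose i * stirling2 (k + 1 - i) (μ + 1))
          + ∑ i ∈ Finset.range ((k - μ) + 1),
            k.choose (i + 1) * stirling2 (k + 1 - i) (μ + 1) := by
      rw [← Finset.sum_add_distrib]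
      refine Finset.sum_congr rfl fun i _ => ?_
      rw [Nat.choose_succ_succ, add_mul]
    -- first sum
    have e2 : ∑ i ∈ Finset.range ((k - μ) + 1),
        k.choose i * stirling2 (k + 1 - i) (μ + 1)
        = (μ + 1) * stirling2 (k + 1) (μ + 2) + stirling2 (k + 1) (μ + 1) := by
      rw [Finset.sum_range_succ']
      have : ∀ i ∈ Finset.range (k - μ),
          k.choose (i + 1) * stirling2 (k + 1 - (i + 1)) (μ + 1)
          = k.choose (i + 1) * stirling2 (k - i) (μ + 1) := by
        intro i hi
        congr 2
        omega
      rw [Finset.sum_congr rfl this, ← ih μ]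
      simp
    -- second sum: use stirling recurrence
    have e3 : ∑ i ∈ Finset.range ((k - μ) + 1),
        k.choose (i + 1) * stirling2 (k + 1 - i) (μ + 1)
        = (∑ i ∈ Finset.range ((k - μ) + 1),
            (μ + 1) * (k.choose (i + 1) * stirling2 (k - i) (μ + 1)))
          + ∑ i ∈ Finset.range ((k - μ) + 1),
            k.choose (i + 1) * stirling2 (k - i) μ := by
      rw [← Finset.sum_add_distrib]
      refine Finset.sum_congr rfl fun i hi => ?_
      have hik : i ≤ k := by
        simp only [Finset.mem_range] at hi; omega
      have h1 : k + 1 - i = (k - i) + 1 := by omega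
      rw [h1]
      cases μ with
      | zero => rw [show stirling2 (k - i + 1) 1 = 1 * stirling2 (k - i) 1 + stirling2 (k - i) 0
          from rfl]; ring
      | succ m => rw [show stirling2 (k - i + 1) (m + 1 + 1)
          = (m + 1 + 1) * stirling2 (k - i) (m + 1 + 1) + stirling2 (k - i) (m + 1) from rfl]; ring
    have e4 : ∑ i ∈ Finset.range ((k - μ) + 1),
        (μ + 1) * (k.choose (i + 1) * stirling2 (k - i) (μ + 1))
        = (μ + 1) * ((μ + 1) * stirling2 (k + 1) (μ + 2)) := by
      rw [← Finset.mul_sum, Finset.sum_range_succ]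
      have hz : stirling2 (k - (k - μ)) (μ + 1) = 0 := by
        have : k - (k - μ) = μ := by omega
        rw [this]
        exact stirling2_eq_zero μ (μ + 1) (by omega)
      rw [hz, mul_zero, add_zero, ← ih μ]
    have e5 : ∑ i ∈ Finset.range ((k - μ) + 1),
        k.choose (i + 1) * stirling2 (k - i) μ
        = μ * stirling2 (k + 1) (μ + 1) := by
      cases μ with
      | zero =>
        rw [zero_mul]
        refine Finset.sum_eq_zero fun i hi => ?_
        simp only [Finset.mem_range, Nat.sub_zero] at hi
        rcases Nat.lt_or_ge i k with h | h
        · have : k - i = (k - i - 1) + 1 := by omega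
          rw [this, show stirling2 (k - i - 1 + 1) 0 = 0 from rfl, mul_zero]
        · have : i = k := by omega
          subst this
          rw [Nat.choose_eq_zero_of_lt (by omega), zero_mul]
      | succ m =>
        have hr : k - (m + 1) + 1 = k - m := by omega
        rw [hr, ← ih m]
    rw [e1, e2, e3, e4, e5,
      show stirling2 (k + 1 + 1) (μ + 2) = (μ + 2) * stirling2 (k + 1) (μ + 2)
        + stirling2 (k + 1) (μ + 1) from rfl]
    ring

/-- for `k ≥ 1` and `0 ≤ μ ≤ k`,
`(μ+1)·S(k+1, μ+2) = Σ_{ν=1}^{k-μ} C(k, ν) · S(k-ν+1, μ+1)`. -/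
theorem stmt13 (k μ : ℕ) (hk : 1 ≤ k) (hμ : μ ≤ k) :
    (μ + 1) * stirling2 (k + 1) (μ + 2)
      = ∑ ν ∈ Finset.Icc 1 (k - μ), k.choose ν * stirling2 (k - ν + 1) (μ + 1) := by
  rw [← Finset.Ico_add_one_right_eq_Icc, Finset.sum_Ico_eq_sum_range]
  rw [aux k μ]
  refine Finset.sum_congr (by rw [Nat.add_sub_cancel]) fun i hi => ?_
  simp only [Finset.mem_range, Nat.succ_sub_one] at hi
  rw [show 1 + i = i + 1 from by omega, show k - (i + 1) + 1 = k - i from by omega]
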